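/- (Spivey's Bell number formula.) For all natural numbers n, m: B(n+m) = Σ_{k=0}^{n} Σ_{j=0}^{m} j^{n−k} · C(n,k) · S(m,j) · B(k), where C(n,k) is the ordinary binomial coefficient and 0^0 is interpreted as 1. -/

import Mathlib

/-- The Stirling numbers of the second kind `S(n,k)`. -/
def stirling2 : ℕ → ℕ → ℕ
  | 0, 0 => 1
  | 0, _ + 1 => 0
  | _ + 1, 0 => 0
  | n + 1, k + 1 =>
    if k + 1 ≤ n + 1 then stirling2 n k + (k + 1) * stirling2 n (k + 1) else 0

/-- The Bell numbers `B(n)`. -/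
def bell (n : ℕ) : ℕ := ∑ k ∈ Finset.range (n + 1), stirling2 n k

lemma stirling2_eq_zero : ∀ {n k : ℕ}, n < k → stirling2 n k = 0 := by
  intro n
  induction n with
  | zero => intro k h; cases k with
    | zero => omega
    | succ k => rfl
  | succ n ih =>
    intro k h
    cases k with
    | zero => omega
    | succ k =>
      simp only [stirling2]
      rw [if_neg (by omega)]

lemma stirling2_rec (n k : ℕ) :
    stirling2 (n+1) (k+1) = stirling2 n k + (k+1) * stirling2 n (k+1) := by
  by_cases h : k ≤ n
  · simp only [stirling2]
    rw [if_pos (by omega)]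
  · rw [stirling2_eq_zero (by omega : n+1 < k+1), stirling2_eq_zero (by omega : n < k),
      stirling2_eq_zero (by omega : n < k+1)]; ring

lemma stirling2_succ_zero (n : ℕ) : stirling2 (n+1) 0 = 0 := rfl

lemma stirling2_one (n : ℕ) : stirling2 (n+1) 1 = 1 := by
  induction n with
  | zero => decide
  | succ n ih => rw [show (1:ℕ) = 0 + 1 from rfl, stirling2_rec]; simp [stirling2_succ_zero, ih]

lemma stirling2_succ_eq_sum (n k : ℕ) :
    stirling2 (n+1) (k+1) = ∑ i ∈ Finset.range (n+1), n.choose i * stirling2 i k := by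
  induction n generalizing k with
  | zero => cases k <;> simp [stirling2]
  | succ n ih =>
    cases k with
    | zero =>
      rw [Finset.sum_range_succ' (fun i => (n+1).choose i * stirling2 i 0)]
      simp only [stirling2, Nat.choose_zero_right, one_mul]
      cases n with
      | zero => decide
      | succ n => simp [stirling2_one, stirling2_succ_zero]
    | succ k =>
      rw [stirling2_rec]
      rw [ih k, ih (k+1)]
      rw [Finset.sum_range_succ' (fun i => (n+1).choose i * stirling2 i (k+1))]
      simp only [Nat.choose_succ_succ, stirling2_rec, Nat.choose_zero_right,
        stirling2_eq_zero (Nat.zero_lt_succ k), mul_zero, add_zero, one_mul]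
      have h1 : ∑ i ∈ Finset.range (n+1),
          (n.choose i + n.choose (i+1)) * (stirling2 i k + (k+1) * stirling2 i (k+1))
          = (∑ i ∈ Finset.range (n+1), n.choose i * stirling2 i k)
            + (k+1) * (∑ i ∈ Finset.range (n+1), n.choose i * stirling2 i (k+1))
            + ∑ i ∈ Finset.range (n+1), n.choose (i+1) * stirling2 (i+1) (k+1) := by
        simp only [stirling2_rec, Finset.mul_sum]
        rw [← Finset.sum_add_distrib, ← Finset.sum_add_distrib]
        apply Finset.sum_congr rfl
        intro i _
        ring
      rw [h1]
      have h2 : ∑ i ∈ Finset.range (n+1), n.choose (i+1) * stirling2 (i+1) (k+1)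
          = ∑ i ∈ Finset.range (n+1), n.choose i * stirling2 i (k+1) := by
        have := Finset.sum_range_succ' (fun i => n.choose i * stirling2 i (k+1)) (n+1)
        have htop : n.choose (n+1) * stirling2 (n+1) (k+1) = 0 := by
          simp [Nat.choose_eq_zero_of_lt (Nat.lt_succ_self n)]
        rw [Finset.sum_range_succ, htop, add_zero] at this
        simpa [stirling2_eq_zero (Nat.zero_lt_succ k)] using this.symm
      rw [h2, ← ih (k+1)]
      ring

lemma sum_stirling2_eq_bell {i N : ℕ} (h : i ≤ N) :
    ∑ k ∈ Finset.range (N+1), stirling2 i k = bell i := by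
  rw [bell]
  symm
  apply Finset.sum_subset
  · exact Finset.range_subset_range.mpr (by omega)
  · intro x _ hx
    rw [Finset.mem_range] at hx
    exact stirling2_eq_zero (by omega)

lemma bell_succ (n : ℕ) :
    bell (n+1) = ∑ i ∈ Finset.range (n+1), n.choose i * bell i := by
  rw [bell, Finset.sum_range_succ' (fun k => stirling2 (n+1) k)]
  rw [stirling2_succ_zero, add_zero]
  simp only [stirling2_succ_eq_sum]
  rw [Finset.sum_comm]
  apply Finset.sum_congr rfl
  intro i hi
  rw [Finset.mem_range] at hi
  rw [← Finset.mul_sum, sum_stirling2_eq_bell (by omega : i ≤ n)]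

lemma binom_pow (N j : ℕ) :
    ∑ k ∈ Finset.range (N+1), N.choose k * j^(N-k) = (j+1)^N := by
  rw [add_pow j 1 N]
  simp only [one_pow, mul_one]
  rw [← Finset.sum_range_reflect]
  apply Finset.sum_congr rfl
  intro k hk
  rw [Finset.mem_range] at hk
  have h1 : N + 1 - 1 - k = N - k := by omega
  have h2 : N - (N - k) = k := by omega
  rw [h1, h2, Nat.choose_symm (by omega : k ≤ N)]
  simp [Nat.cast_id, mul_comm]

lemma choose_pow_sum (n i j : ℕ) (h : i ≤ n) :
    ∑ k ∈ Finset.range (n+1), n.choose k * j^(n-k) * k.choose i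
      = n.choose i * (j+1)^(n-i) := by
  rw [Finset.range_eq_Ico,
    ← Finset.sum_Ico_consecutive _ (Nat.zero_le i) (by omega : i ≤ n+1)]
  have h0 : ∑ k ∈ Finset.Ico 0 i, n.choose k * j^(n-k) * k.choose i = 0 := by
    apply Finset.sum_eq_zero
    intro k hk
    rw [Finset.mem_Ico] at hk
    rw [Nat.choose_eq_zero_of_lt hk.2, mul_zero]
  rw [h0, zero_add, Finset.sum_Ico_eq_sum_range]
  have hrange : n + 1 - i = (n - i) + 1 := by omega
  rw [hrange]
  have hterm : ∀ t ∈ Finset.range ((n-i)+1),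
      n.choose (i+t) * j^(n-(i+t)) * (i+t).choose i
        = n.choose i * ((n-i).choose t * j^((n-i)-t)) := by
    intro t ht
    rw [Finset.mem_range] at ht
    have hkn : i + t ≤ n := by omega
    have hcm := Nat.choose_mul (n := n) (Nat.le_add_right i t)
    rw [Nat.add_sub_cancel_left] at hcm
    have hx : n - (i+t) = (n-i) - t := by omega
    rw [hx]
    calc n.choose (i+t) * j^((n-i)-t) * (i+t).choose i
        = n.choose (i+t) * (i+t).choose i * j^((n-i)-t) := by ring
      _ = n.choose i * (n-i).choose t * j^((n-i)-t) := by rw [hcm]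
      _ = n.choose i * ((n-i).choose t * j^((n-i)-t)) := by ring
  rw [Finset.sum_congr rfl hterm, ← Finset.mul_sum, binom_pow]

lemma key (n j : ℕ) :
    ∑ k ∈ Finset.range (n+1), n.choose k * j ^ (n-k) * bell (k+1)
      = ∑ k ∈ Finset.range (n+1), n.choose k * (j+1) ^ (n-k) * bell k := by
  have step1 : ∀ k ∈ Finset.range (n+1),
      n.choose k * j ^ (n-k) * bell (k+1)
        = ∑ i ∈ Finset.range (n+1), n.choose k * j^(n-k) * k.choose i * bell i := by
    intro k hk
    rw [Finset.mem_range] at hk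
    rw [bell_succ k, Finset.mul_sum]
    have hext : ∑ i ∈ Finset.range (k+1), n.choose k * j^(n-k) * (k.choose i * bell i)
        = ∑ i ∈ Finset.range (n+1), n.choose k * j^(n-k) * (k.choose i * bell i) := by
      apply Finset.sum_subset (Finset.range_subset_range.mpr (by omega))
      intro x _ hx
      rw [Finset.mem_range, not_lt] at hx
      rw [Nat.choose_eq_zero_of_lt (by omega : k < x)]
      ring
    rw [hext]
    exact Finset.sum_congr rfl (fun i _ => by ring)
  rw [Finset.sum_congr rfl step1, Finset.sum_comm]
  apply Finset.sum_congr rfl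
  intro i hi
  rw [Finset.mem_range] at hi
  rw [← Finset.sum_mul, choose_pow_sum n i j (by omega)]

lemma hL (n j : ℕ) :
    ∑ k ∈ Finset.range (n+2), j^(n+1-k) * (n+1).choose k * bell k
      = ∑ k ∈ Finset.range (n+1), n.choose k * bell k * ((j+1)^(n-k) + j^(n-k+1)) := by
  rw [Finset.sum_range_succ' (fun k => j^(n+1-k) * (n+1).choose k * bell k)]
  have e2 : ∀ k ∈ Finset.range (n+1),
      j^(n+1-(k+1)) * (n+1).choose (k+1) * bell (k+1)
        = n.choose k * j^(n-k) * bell (k+1) + j^(n-k) * (n.choose (k+1) * bell (k+1)) := by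
    intro k _
    rw [Nat.succ_sub_succ, Nat.choose_succ_succ]
    ring
  rw [Finset.sum_congr rfl e2, Finset.sum_add_distrib, key n j]
  have e3 : (∑ k ∈ Finset.range (n+1), j^(n-k) * (n.choose (k+1) * bell (k+1)))
      + j^(n+1-0) * (n+1).choose 0 * bell 0
      = ∑ k ∈ Finset.range (n+1), n.choose k * j^(n-k+1) * bell k := by
    have e4 := Finset.sum_range_succ' (fun k => n.choose k * j^(n+1-k) * bell k) (n+1)
    rw [Finset.sum_range_succ] at e4
    have htop : n.choose (n+1) * j^(n+1-(n+1)) * bell (n+1) = 0 := by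
      rw [Nat.choose_eq_zero_of_lt (Nat.lt_succ_self n)]
      ring
    rw [htop, add_zero] at e4
    have e5 : ∑ k ∈ Finset.range (n+1), n.choose k * j^(n+1-k) * bell k
        = ∑ k ∈ Finset.range (n+1), n.choose k * j^(n-k+1) * bell k := by
      apply Finset.sum_congr rfl
      intro k hk
      rw [Finset.mem_range] at hk
      rw [show n+1-k = n-k+1 by omega]
    rw [e5] at e4
    rw [e4]
    congr 1
    · apply Finset.sum_congr rfl
      intro k hk
      rw [show n+1-(k+1) = n-k by omega]
      ring
    · simp only [Nat.choose_zero_right]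
      ring
  rw [add_assoc, e3, ← Finset.sum_add_distrib]
  exact Finset.sum_congr rfl (fun k _ => by ring)

lemma hR (m e : ℕ) :
    ∑ j ∈ Finset.range (m+2), j^e * stirling2 (m+1) j
      = ∑ j ∈ Finset.range (m+1), stirling2 m j * ((j+1)^e + j^(e+1)) := by
  rw [Finset.sum_range_succ' (fun j => j^e * stirling2 (m+1) j)]
  rw [stirling2_succ_zero, mul_zero, add_zero]
  have e2 : ∀ j ∈ Finset.range (m+1), (j+1)^e * stirling2 (m+1) (j+1)
      = (j+1)^e * stirling2 m j + (j+1)^(e+1) * stirling2 m (j+1) := by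
    intro j _
    rw [stirling2_rec]
    ring
  rw [Finset.sum_congr rfl e2, Finset.sum_add_distrib]
  have e3 : ∑ j ∈ Finset.range (m+1), (j+1)^(e+1) * stirling2 m (j+1)
      = ∑ j ∈ Finset.range (m+1), j^(e+1) * stirling2 m j := by
    have h1 := Finset.sum_range_succ' (fun j => j^(e+1) * stirling2 m j) (m+1)
    rw [Finset.sum_range_succ] at h1
    have hg0 : (0:ℕ)^(e+1) * stirling2 m 0 = 0 := by
      rw [zero_pow (Nat.succ_ne_zero e)]
      ring
    have hgt : ((m+1:ℕ))^(e+1) * stirling2 m (m+1) = 0 := by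
      rw [stirling2_eq_zero (Nat.lt_succ_self m)]
      ring
    rw [hg0, hgt, add_zero, add_zero] at h1
    exact h1.symm
  rw [e3, ← Finset.sum_add_distrib]
  exact Finset.sum_congr rfl (fun j _ => by ring)

lemma spivey_step (n m : ℕ) :
    (∑ k ∈ Finset.range (n+1+1), ∑ j ∈ Finset.range (m+1),
        j ^ (n+1-k) * (n+1).choose k * stirling2 m j * bell k)
    = ∑ k ∈ Finset.range (n+1), ∑ j ∈ Finset.range (m+1+1),
        j ^ (n-k) * n.choose k * stirling2 (m+1) j * bell k := by
  have hLHS : (∑ k ∈ Finset.range (n+1+1), ∑ j ∈ Finset.range (m+1),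
        j ^ (n+1-k) * (n+1).choose k * stirling2 m j * bell k)
      = ∑ j ∈ Finset.range (m+1), ∑ k ∈ Finset.range (n+1),
          stirling2 m j * (n.choose k * bell k * ((j+1)^(n-k) + j^(n-k+1))) := by
    rw [Finset.sum_comm]
    apply Finset.sum_congr rfl
    intro j _
    have hfac : ∑ k ∈ Finset.range (n+1+1), j ^ (n+1-k) * (n+1).choose k * stirling2 m j * bell k
        = stirling2 m j * ∑ k ∈ Finset.range (n+2), j^(n+1-k) * (n+1).choose k * bell k := by
      rw [Finset.mul_sum]
      exact Finset.sum_congr rfl (fun k _ => by ring)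
    rw [hfac, hL n j, Finset.mul_sum]
  have hRHS : (∑ k ∈ Finset.range (n+1), ∑ j ∈ Finset.range (m+1+1),
        j ^ (n-k) * n.choose k * stirling2 (m+1) j * bell k)
      = ∑ k ∈ Finset.range (n+1), ∑ j ∈ Finset.range (m+1),
          stirling2 m j * (n.choose k * bell k * ((j+1)^(n-k) + j^(n-k+1))) := by
    apply Finset.sum_congr rfl
    intro k _
    have hfac : ∑ j ∈ Finset.range (m+1+1), j ^ (n-k) * n.choose k * stirling2 (m+1) j * bell k
        = (n.choose k * bell k) * ∑ j ∈ Finset.range (m+2), j^(n-k) * stirling2 (m+1) j := by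
      rw [Finset.mul_sum]
      exact Finset.sum_congr rfl (fun j _ => by ring)
    rw [hfac, hR m (n-k), Finset.mul_sum]
    exact Finset.sum_congr rfl (fun j _ => by ring)
  rw [hLHS, hRHS, Finset.sum_comm]

/-- Spivey's Bell number formula. -/
theorem spivey_bell_formula (n m : ℕ) :
    bell (n + m)
    = ∑ k ∈ Finset.range (n + 1), ∑ j ∈ Finset.range (m + 1),
        j ^ (n - k) * n.choose k * stirling2 m j * bell k := by
  induction m generalizing n with
  | zero =>
    simp only [Nat.add_zero, zero_add, Finset.sum_range_one]
    rw [Finset.sum_range_succ]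
    have h0 : ∑ k ∈ Finset.range n, (0:ℕ)^(n-k) * n.choose k * stirling2 0 0 * bell k = 0 := by
      apply Finset.sum_eq_zero
      intro k hk
      rw [Finset.mem_range] at hk
      rw [zero_pow (by omega : n - k ≠ 0)]
      ring
    rw [h0, zero_add, Nat.sub_self, pow_zero, Nat.choose_self]
    show bell n = 1 * 1 * stirling2 0 0 * bell n
    norm_num [stirling2]
  | succ m ih =>
    rw [show n + (m+1) = (n+1) + m by omega, ih (n+1), spivey_step n m]
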